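/- Let G be a finite simple graph, k ≥ 1, T ⊆ V(G), and let H be a graph together with a labeling ℓ assigning to each node of H a k-coloring of the induced subgraph G[T]. Then (H,ℓ) is equal to the contracted solution graph C^c_k(G,T) (i.e., there is a label-preserving isomorphism between them) if and only if one can assign to every node x of H a nonempty set S_x of k-colorings of G such that: (a) the sets S_x, for x ∈ V(H), partition the set of all k-colorings of G; (b) for every x ∈ V(H) and every γ ∈ S_x, the restriction of γ to T equals ℓ(x); (c) for every edge xy of H, ℓ(x) ≠ ℓ(y); (d) for every x ∈ V(H), S_x induces a connected subgraph of C_k(G); and (e) for every pair of distinct nodes x, y of H, xy is an edge of H if and only if there exist α ∈ S_x and β ∈ S_y that are adjacent in C_k(G). -/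

import Mathlib

open SimpleGraph

/-- A proper `k`-coloring of a graph. -/
def IsColoring {W : Type*} (G : SimpleGraph W) (k : ℕ) (α : W → Fin k) : Prop :=
  ∀ u v : W, G.Adj u v → α u ≠ α v

/-- The `k`-color graph `C_k(G)`: nodes are proper `k`-colorings of `G`,
two colorings being adjacent iff they differ on exactly one vertex. -/
def colorGraph {W : Type*} (G : SimpleGraph W) (k : ℕ) :
    SimpleGraph {α : W → Fin k // IsColoring G k α} where
  Adj α β := ∃! w, α.1 w ≠ β.1 w
  symm := ⟨by
    rintro α β ⟨w, hw, hu⟩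
    exact ⟨w, hw.symm, fun u hu' => hu u hu'.symm⟩⟩
  loopless := ⟨by
    rintro α ⟨w, hw, -⟩
    exact hw rfl⟩

/-- The subgraph of a labeled graph consisting of the edges between
equally labeled nodes. -/
def sameLabelSub {N L : Type*} (H : SimpleGraph N) (f : N → L) : SimpleGraph N where
  Adj x y := H.Adj x y ∧ f x = f y
  symm := ⟨fun _ _ h => ⟨h.1.symm, h.2.symm⟩⟩
  loopless := ⟨fun x h => H.loopless.irrefl x h.1⟩

/-- The quotient graph obtained from a labeled graph by contracting every
(maximal) connected set of equally labeled nodes (i.e. every label component)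
into a single node. -/
def quotGraph {N L : Type*} (H : SimpleGraph N) (f : N → L) :
    SimpleGraph (sameLabelSub H f).ConnectedComponent where
  Adj c d := c ≠ d ∧ ∃ a b, (sameLabelSub H f).connectedComponentMk a = c ∧
      (sameLabelSub H f).connectedComponentMk b = d ∧ H.Adj a b
  symm := ⟨by
    rintro c d ⟨hne, a, b, ha, hb, hab⟩
    exact ⟨hne.symm, b, a, hb, ha, hab.symm⟩⟩
  loopless := ⟨fun c h => h.1 rfl⟩

/-- The common label of a label component. -/
def quotLabel {N L : Type*} (H : SimpleGraph N) (f : N → L) :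
    (sameLabelSub H f).ConnectedComponent → L :=
  SimpleGraph.ConnectedComponent.lift f (by
    intro v w p hp
    clear hp
    induction p with
    | nil => rfl
    | cons h _ ih =>
      obtain ⟨-, h2⟩ := h
      exact h2.trans ih)

/-- The label of a coloring: its restriction to the terminal set `T`. -/
def csgLabelFun {W : Type*} (G : SimpleGraph W) (k : ℕ) (T : Set W) :
    {α : W → Fin k // IsColoring G k α} → (T → Fin k) :=
  fun α t => α.1 t.1

/-- The node set of the contracted solution graph: the label components. -/
abbrev CSGNode {W : Type*} (G : SimpleGraph W) (k : ℕ) (T : Set W) :=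
  (sameLabelSub (colorGraph G k) (csgLabelFun G k T)).ConnectedComponent

/-- The contracted solution graph `C^c_k(G,T)`. -/
def CSG {W : Type*} (G : SimpleGraph W) (k : ℕ) (T : Set W) : SimpleGraph (CSGNode G k T) :=
  quotGraph (colorGraph G k) (csgLabelFun G k T)

/-- The `γ`-node of the contracted solution graph: the label component containing `γ`. -/
def csgNode {W : Type*} (G : SimpleGraph W) (k : ℕ) (T : Set W)
    (γ : {α : W → Fin k // IsColoring G k α}) : CSGNode G k T :=
  (sameLabelSub (colorGraph G k) (csgLabelFun G k T)).connectedComponentMk γ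

/-- The label of a node of the contracted solution graph: the common restriction
to `T` of its colorings. -/
def csgLabel {W : Type*} (G : SimpleGraph W) (k : ℕ) (T : Set W) :
    CSGNode G k T → (T → Fin k) :=
  quotLabel (colorGraph G k) (csgLabelFun G k T)

/-- The restriction of a proper coloring to an induced subgraph. -/
def restrictColoring {W : Type*} (G : SimpleGraph W) (k : ℕ) (S : Set W)
    (γ : {α : W → Fin k // IsColoring G k α}) :
    {α : S → Fin k // IsColoring (G.induce S) k α} :=
  ⟨fun u => γ.1 u.1, fun u w h => γ.2 u.1 w.1 h⟩

/-- A graph is chordal if it contains no induced cycle of length greater than 3. -/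
def Chordal {W : Type*} (G : SimpleGraph W) : Prop :=
  ∀ n : ℕ, 4 ≤ n → IsEmpty (SimpleGraph.cycleGraph n ↪g G)

/-- `S` is a vertex cut: `G - S` is disconnected. -/
def IsVertexCut {W : Type*} (G : SimpleGraph W) (S : Set W) : Prop :=
  ¬ (G.induce Sᶜ).Preconnected

/-- `G` is `l`-connected. -/
def LConnected {W : Type*} (G : SimpleGraph W) (l : ℕ) : Prop :=
  G.Connected ∧ l + 1 ≤ Nat.card W ∧ ∀ S : Set W, IsVertexCut G S → l ≤ S.ncard

/-- A labeled graph `(H,ℓ)`, whose labels are `k`-colorings of the complete graph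
on a vertex (type) `S`, is an `(|S|,k)`-color-complete graph. -/
def IsColorComplete {N S : Type*} (k : ℕ) (H : SimpleGraph N) (ℓ : N → S → Fin k) : Prop :=
  (∀ x, Function.Injective (ℓ x)) ∧
  (∀ f : S → Fin k, Function.Injective f → ∃! x, ℓ x = f) ∧
  (∀ x y, H.Adj x y ↔ ∃! s, ℓ x s ≠ ℓ y s)

/-- The injective neighborhood property. -/
def INP {N L : Type*} (H : SimpleGraph N) (ℓ : N → L) : Prop :=
  ∀ u v w : N, H.Adj u v → H.Adj u w → v ≠ w → ℓ v ≠ ℓ w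

/-- The weight `w(P)` of a walk `P` in a labeled graph: the sum over the vertices `x`
of `P` of the number of colors used by labels of neighbors of `x` in `P` but not by
the label of `x`. -/
noncomputable def walkWeight {N S : Type*} {k : ℕ} {G : SimpleGraph N} (ℓ : N → S → Fin k)
    {a b : N} (P : G.Walk a b) : ℕ :=
  letI := Classical.decEq N
  ∑ x ∈ P.support.toFinset,
    ((⋃ y ∈ P.toSubgraph.neighborSet x, Set.range (ℓ y)) \ Set.range (ℓ x)).ncard


/-- Walking in a subgraph `G' ≤ G` stays within the `G'`-component and yields
reachability in the `G`-graph induced on that component's support. -/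
lemma aux_walk_reach {V : Type*} {G' G : SimpleGraph V} (hle : G' ≤ G)
    (c : G'.ConnectedComponent) :
    ∀ {a b : V} (_ : G'.Walk a b) (hb : G'.connectedComponentMk b = c),
      ∃ ha : G'.connectedComponentMk a = c,
        (G.induce c.supp).Reachable ⟨a, ha⟩ ⟨b, hb⟩ := by
  intro a b p
  induction p with
  | nil => intro hb; exact ⟨hb, Reachable.refl _⟩
  | @cons u v w huv p ih =>
    intro hb
    obtain ⟨hv, hr⟩ := ih hb
    have hu : G'.connectedComponentMk u = c :=
      (ConnectedComponent.sound huv.reachable).trans hv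
    refine ⟨hu, Reachable.trans (Adj.reachable ?_) hr⟩
    exact hle huv

lemma aux_induce_supp_connected {V : Type*} {G' G : SimpleGraph V} (hle : G' ≤ G)
    (c : G'.ConnectedComponent) : (G.induce c.supp).Connected := by
  obtain ⟨v, hv⟩ := c.exists_rep
  haveI : Nonempty c.supp := ⟨⟨v, hv⟩⟩
  refine ⟨fun a b => ?_⟩
  obtain ⟨a, ha⟩ := a
  obtain ⟨b, hb⟩ := b
  have : G'.Reachable a b := ConnectedComponent.exact (ha.trans hb.symm)
  obtain ⟨p⟩ := this
  obtain ⟨ha', hr⟩ := aux_walk_reach hle c p hb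
  exact hr

/-- Within a set where the label is constant, walks in the induced graph yield
reachability in the same-label subgraph. -/
lemma aux_reach_sameLabel {V L : Type*} {H : SimpleGraph V} {f : V → L} {s : Set V}
    (hc : ∀ u ∈ s, ∀ v ∈ s, f u = f v) :
    ∀ {a b : s} (_ : (H.induce s).Walk a b), (sameLabelSub H f).Reachable a.1 b.1 := by
  intro a b p
  induction p with
  | nil => exact Reachable.refl _
  | @cons u v w huv p ih =>
    refine Reachable.trans (Adj.reachable ?_) ih
    exact ⟨huv, hc u.1 u.2 v.1 v.2⟩

/-- characterization of contracted solution graphs by certificates. -/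
theorem statement_0 {V : Type} [Fintype V] [DecidableEq V]
    (G : SimpleGraph V) (k : ℕ) (hk : 1 ≤ k) (T : Set V)
    {N : Type} (H : SimpleGraph N) (ℓ : N → (T → Fin k))
    (hℓ : ∀ x, IsColoring (G.induce T) k (ℓ x)) :
    (∃ φ : H ≃g CSG G k T, ∀ x, csgLabel G k T (φ x) = ℓ x) ↔
    (∃ S : N → Set {α : V → Fin k // IsColoring G k α},
      (∀ x, (S x).Nonempty) ∧
      (∀ γ : {α : V → Fin k // IsColoring G k α}, ∃! x, γ ∈ S x) ∧
      (∀ x, ∀ γ ∈ S x, csgLabelFun G k T γ = ℓ x) ∧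
      (∀ x y, H.Adj x y → ℓ x ≠ ℓ y) ∧
      (∀ x, ((colorGraph G k).induce (S x)).Connected) ∧
      (∀ x y : N, x ≠ y →
        (H.Adj x y ↔ ∃ α ∈ S x, ∃ β ∈ S y, (colorGraph G k).Adj α β))) := by
  classical
  constructor
  · rintro ⟨φ, hφ⟩
    refine ⟨fun x => {γ | csgNode G k T γ = φ x}, ?_, ?_, ?_, ?_, ?_, ?_⟩
    · intro x
      obtain ⟨γ, hγ⟩ := (φ x).exists_rep
      exact ⟨γ, hγ⟩
    · intro γ
      refine ⟨φ.symm (csgNode G k T γ), ?_, ?_⟩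
      · show csgNode G k T γ = φ (φ.symm _)
        simp
      · intro y hy
        have : csgNode G k T γ = φ y := hy
        simp [this]
    · intro x γ hγ
      have h1 : csgLabel G k T (csgNode G k T γ) = csgLabelFun G k T γ := rfl
      have h2 : csgNode G k T γ = φ x := hγ
      rw [← hφ x, ← h2, h1]
    · intro x y hxy hlab
      have hadj : (CSG G k T).Adj (φ x) (φ y) := φ.map_rel_iff.mpr hxy
      obtain ⟨hne, a, b, ha, hb, hab⟩ := hadj
      have hla : csgLabelFun G k T a = ℓ x := by
        have h1 : csgLabel G k T (csgNode G k T a) = csgLabelFun G k T a := rfl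
        have h2 : csgNode G k T a = φ x := ha
        rw [← hφ x, ← h2, h1]
      have hlb : csgLabelFun G k T b = ℓ y := by
        have h1 : csgLabel G k T (csgNode G k T b) = csgLabelFun G k T b := rfl
        have h2 : csgNode G k T b = φ y := hb
        rw [← hφ y, ← h2, h1]
      have hsame : (sameLabelSub (colorGraph G k) (csgLabelFun G k T)).Adj a b :=
        ⟨hab, by rw [hla, hlb, hlab]⟩
      exact hne ((ha.symm.trans (ConnectedComponent.sound hsame.reachable)).trans hb)
    · intro x
      have hle : sameLabelSub (colorGraph G k) (csgLabelFun G k T) ≤ colorGraph G k :=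
        fun _ _ h => h.1
      exact aux_induce_supp_connected hle (φ x)
    · intro x y hne
      constructor
      · intro hxy
        obtain ⟨hcne, a, b, ha, hb, hab⟩ := φ.map_rel_iff.mpr hxy
        exact ⟨a, ha, b, hb, hab⟩
      · rintro ⟨α, hα, β, hβ, hadj⟩
        exact φ.map_rel_iff.mp ⟨fun h => hne (φ.injective h), α, β, hα, hβ, hadj⟩
  · rintro ⟨S, h1, h2, h3, h4, h5, h6⟩
    have cellEx : ∀ γ, ∃ x, γ ∈ S x := fun γ => (h2 γ).exists
    set cell : {α : V → Fin k // IsColoring G k α} → N := fun γ => (cellEx γ).choose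
      with hcell
    have cell_mem : ∀ γ, γ ∈ S (cell γ) := fun γ => (cellEx γ).choose_spec
    have cell_eq : ∀ γ x, γ ∈ S x → cell γ = x := fun γ x hx =>
      (h2 γ).unique (cell_mem γ) hx
    have same_cell_comp : ∀ (γ δ : {α : V → Fin k // IsColoring G k α}) (x : N),
        γ ∈ S x → δ ∈ S x → csgNode G k T γ = csgNode G k T δ := by
      intro γ δ x hγ hδ
      obtain ⟨p⟩ := (h5 x).preconnected ⟨γ, hγ⟩ ⟨δ, hδ⟩
      have hc : ∀ u ∈ S x, ∀ v ∈ S x, csgLabelFun G k T u = csgLabelFun G k T v := by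
        intro u hu v hv; rw [h3 x u hu, h3 x v hv]
      exact ConnectedComponent.sound (aux_reach_sameLabel hc p)
    have cell_adj : ∀ γ δ,
        (sameLabelSub (colorGraph G k) (csgLabelFun G k T)).Adj γ δ → cell γ = cell δ := by
      rintro γ δ ⟨hadj, hlab⟩
      by_contra hne
      have hH : H.Adj (cell γ) (cell δ) :=
        (h6 _ _ hne).mpr ⟨γ, cell_mem γ, δ, cell_mem δ, hadj⟩
      have : ℓ (cell γ) = ℓ (cell δ) := by
        rw [← h3 _ γ (cell_mem γ), ← h3 _ δ (cell_mem δ), hlab]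
      exact h4 _ _ hH this
    have cell_walk : ∀ (v w : {α : V → Fin k // IsColoring G k α})
        (p : (sameLabelSub (colorGraph G k) (csgLabelFun G k T)).Walk v w),
        p.IsPath → cell v = cell w := by
      intro v w p hp
      clear hp
      induction p with
      | nil => rfl
      | cons h _ ih => exact (cell_adj _ _ h).trans ih
    set ψ : CSGNode G k T → N := ConnectedComponent.lift cell cell_walk with hψ
    have ψ_mk : ∀ γ, ψ (csgNode G k T γ) = cell γ := fun γ => rfl
    have ψ_surj : Function.Surjective ψ := by
      intro x
      obtain ⟨γ, hγ⟩ := h1 x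
      exact ⟨csgNode G k T γ, (ψ_mk γ).trans (cell_eq γ x hγ)⟩
    have ψ_inj : Function.Injective ψ := by
      intro c d h
      obtain ⟨γ, hγ⟩ := c.exists_rep
      obtain ⟨δ, hδ⟩ := d.exists_rep
      subst hγ
      subst hδ
      have h' : cell γ = cell δ := h
      exact same_cell_comp γ δ (cell δ) (h' ▸ cell_mem γ) (cell_mem δ)
    have mem_comp : ∀ (c : CSGNode G k T) (α), α ∈ S (ψ c) →
        csgNode G k T α = c := by
      intro c α hα
      obtain ⟨γ, hγ⟩ := c.exists_rep
      have h1' : ψ c = cell γ := by rw [← hγ]; rfl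
      have hγmem : γ ∈ S (ψ c) := h1' ▸ cell_mem γ
      exact (same_cell_comp α γ (ψ c) hα hγmem).trans hγ
    have adj_iff : ∀ c d : CSGNode G k T, (CSG G k T).Adj c d ↔ H.Adj (ψ c) (ψ d) := by
      intro c d
      constructor
      · rintro ⟨hne, a, b, ha, hb, hab⟩
        have hψc : ψ c = cell a := by rw [← ha]; rfl
        have hψd : ψ d = cell b := by rw [← hb]; rfl
        have hcne : cell a ≠ cell b := by
          intro h
          exact hne (ha.symm.trans ((same_cell_comp a b (cell b)
            (h ▸ cell_mem a) (cell_mem b)).trans hb))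
        rw [hψc, hψd]
        exact (h6 _ _ hcne).mpr ⟨a, cell_mem a, b, cell_mem b, hab⟩
      · intro hH
        have hne' : ψ c ≠ ψ d := hH.ne
        obtain ⟨α, hα, β, hβ, hadj⟩ := (h6 _ _ hne').mp hH
        exact ⟨fun h => hne' (congrArg ψ h), α, β, mem_comp c α hα, mem_comp d β hβ, hadj⟩
    let e : CSGNode G k T ≃ N := Equiv.ofBijective ψ ⟨ψ_inj, ψ_surj⟩
    refine ⟨⟨e.symm, ?_⟩, ?_⟩
    · intro x y
      have hx : ψ (e.symm x) = x := e.apply_symm_apply x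
      have hy : ψ (e.symm y) = y := e.apply_symm_apply y
      rw [adj_iff, hx, hy]
    · intro x
      obtain ⟨γ, hγ⟩ := (e.symm x : CSGNode G k T).exists_rep
      have hx : ψ (e.symm x) = x := e.apply_symm_apply x
      have hcellγ : cell γ = x := by
        rw [← hx, ← hγ]
        rfl
      have hγmem : γ ∈ S x := hcellγ ▸ cell_mem γ
      show csgLabel G k T (e.symm x) = ℓ x
      rw [← hγ]
      exact h3 x γ hγmem
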